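/- Let x be a natural number whose binary representation, when split into consecutive blocks of length 2^(k+1), has blocks viewed as values x_i < 2^(2^(k+1)). Then the operation (x AND m) + ((x / 2^(2^k)) AND m), where m is the mask with the low 2^k bits of every 2^(k+1)-bit block set, produces a number whose i-th block of length 2^(k+1) equals (low half of x_i) + (high half of x_i), provided these sums fit in 2^(k+1) bits. -/

import Mathlib

open Finset

private lemma aux_sum_lt (n M : ℕ) (a : ℕ → ℕ) (h : ∀ i < M, a i < 2 ^ n) :
    ∑ i ∈ range M, a i * 2 ^ (i * n) < 2 ^ (M * n) := by
  induction M with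
  | zero => simp
  | succ M ih =>
    rw [Finset.sum_range_succ]
    have h1 : ∑ i ∈ range M, a i * 2 ^ (i * n) < 2 ^ (M * n) :=
      ih (fun i hi => h i (by omega))
    have h2 : a M + 1 ≤ 2 ^ n := h M (by omega)
    calc ∑ i ∈ range M, a i * 2 ^ (i * n) + a M * 2 ^ (M * n)
        < 2 ^ (M * n) + a M * 2 ^ (M * n) := by omega
      _ = (a M + 1) * 2 ^ (M * n) := by ring
      _ ≤ 2 ^ n * 2 ^ (M * n) := by
          exact Nat.mul_le_mul_right _ h2
      _ = 2 ^ ((M + 1) * n) := by rw [← pow_add]; ring_nf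

private lemma aux_extract (n M : ℕ) (a : ℕ → ℕ) (h : ∀ i < M, a i < 2 ^ n)
    (i : ℕ) (hi : i < M) :
    (∑ j ∈ range M, a j * 2 ^ (j * n)) / 2 ^ (i * n) % 2 ^ n = a i := by
  have hsplit : ∑ j ∈ range M, a j * 2 ^ (j * n)
      = (∑ j ∈ range i, a j * 2 ^ (j * n)) + a i * 2 ^ (i * n)
        + ∑ j ∈ Finset.Ico (i + 1) M, a j * 2 ^ (j * n) := by
    rw [Finset.range_eq_Ico, ← Finset.sum_Ico_consecutive _ (Nat.zero_le (i+1)) hi,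
      ← Finset.range_eq_Ico, Finset.sum_range_succ]
  have hre : ∑ j ∈ Finset.Ico (i + 1) M, a j * 2 ^ (j * n)
      = 2 ^ (i * n) * (2 ^ n * ∑ j ∈ range (M - (i+1)), a (i + 1 + j) * 2 ^ (j * n)) := by
    rw [Finset.sum_Ico_eq_sum_range, Finset.mul_sum, Finset.mul_sum]
    apply Finset.sum_congr rfl
    intro j _
    rw [show (i + 1 + j) * n = j * n + (i * n + n) by ring, pow_add, pow_add]
    ring
  have hlow : (∑ j ∈ range i, a j * 2 ^ (j * n)) < 2 ^ (i * n) :=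
    aux_sum_lt n i a (fun j hj => h j (by omega))
  set L := ∑ j ∈ range i, a j * 2 ^ (j * n)
  set T := ∑ j ∈ range (M - (i+1)), a (i + 1 + j) * 2 ^ (j * n)
  rw [hsplit, hre]
  have : L + a i * 2 ^ (i * n) + 2 ^ (i * n) * (2 ^ n * T)
      = L + 2 ^ (i * n) * (a i + 2 ^ n * T) := by ring
  rw [this, Nat.add_mul_div_left _ _ (Nat.pow_pos (by norm_num)),
    Nat.div_eq_of_lt hlow, Nat.zero_add, Nat.add_mul_mod_self_left,
    Nat.mod_eq_of_lt (h i hi)]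

private lemma aux_recompose (n M : ℕ) (y : ℕ) (hy : y < 2 ^ (M * n)) :
    ∑ i ∈ range M, (y / 2 ^ (i * n) % 2 ^ n) * 2 ^ (i * n) = y := by
  induction M generalizing y with
  | zero => simp at hy ⊢; omega
  | succ M ih =>
    rw [Finset.sum_range_succ']
    have key : ∀ i : ℕ, (y / 2 ^ ((i + 1) * n) % 2 ^ n) * 2 ^ ((i + 1) * n)
        = (((y / 2 ^ n) / 2 ^ (i * n) % 2 ^ n) * 2 ^ (i * n)) * 2 ^ n := by
      intro i
      rw [show (i + 1) * n = n + i * n by ring, pow_add, ← Nat.div_div_eq_div_mul]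
      ring
    simp only [key]
    rw [← Finset.sum_mul]
    have hy2 : y / 2 ^ n < 2 ^ (M * n) := by
      rw [Nat.div_lt_iff_lt_mul (Nat.pow_pos (by norm_num)), ← pow_add]
      calc y < 2 ^ ((M + 1) * n) := hy
        _ = 2 ^ (M * n + n) := by ring_nf
    rw [ih _ hy2]
    simp only [Nat.zero_mul, pow_zero, Nat.div_one, mul_one]
    rw [mul_comm]
    exact Nat.div_add_mod y (2 ^ n)

private lemma aux_and (n M : ℕ) (a b : ℕ → ℕ) (ha : ∀ i < M, a i < 2 ^ n)
    (hb : ∀ i < M, b i < 2 ^ n) (hn : 0 < n) :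
    (∑ i ∈ range M, a i * 2 ^ (i * n)) &&& (∑ i ∈ range M, b i * 2 ^ (i * n))
      = ∑ i ∈ range M, (a i &&& b i) * 2 ^ (i * n) := by
  have hab : ∀ i < M, (a i &&& b i) < 2 ^ n := fun i hi =>
    lt_of_le_of_lt Nat.and_le_left (ha i hi)
  apply Nat.eq_of_testBit_eq
  intro j
  set q := j / n with hq
  set r := j % n with hr
  have hj : q * n + r = j := by rw [hq, hr, Nat.div_add_mod' j n]
  have hrn : r < n := Nat.mod_lt _ hn
  have tb : ∀ (d : ℕ → ℕ), (∀ i < M, d i < 2 ^ n) →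
      (∑ i ∈ range M, d i * 2 ^ (i * n)).testBit j
        = if q < M then (d q).testBit r else false := by
    intro d hd
    by_cases hqM : q < M
    · simp only [hqM, if_true]
      have h1 : (∑ i ∈ range M, d i * 2 ^ (i * n)).testBit j
          = ((∑ i ∈ range M, d i * 2 ^ (i * n)) / 2 ^ (q * n)).testBit r := by
        rw [← Nat.shiftRight_eq_div_pow, Nat.testBit_shiftRight, hj]
      have h2 : ((∑ i ∈ range M, d i * 2 ^ (i * n)) / 2 ^ (q * n)).testBit r
          = (((∑ i ∈ range M, d i * 2 ^ (i * n)) / 2 ^ (q * n)) % 2 ^ n).testBit r := by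
        rw [Nat.testBit_mod_two_pow]; simp [hrn]
      rw [h1, h2, aux_extract n M d hd q hqM]
    · simp only [hqM, if_false]
      apply Nat.testBit_lt_two_pow
      calc ∑ i ∈ range M, d i * 2 ^ (i * n) < 2 ^ (M * n) := aux_sum_lt n M d hd
        _ ≤ 2 ^ j := by
          apply Nat.pow_le_pow_right (by norm_num)
          have : M ≤ q := by omega
          calc M * n ≤ q * n := Nat.mul_le_mul_right _ this
            _ ≤ j := by omega
  rw [Nat.testBit_and, tb a ha, tb b hb, tb _ hab]
  by_cases hqM : q < M
  · simp [hqM, Nat.testBit_and]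
  · simp [hqM]

private lemma aux_mask (n h M : ℕ) (y : ℕ) (hy : y < 2 ^ (M * n)) (hhn : h ≤ n)
    (hn : 0 < n) :
    y &&& (∑ j ∈ range M, (2 ^ h - 1) * 2 ^ (j * n))
      = ∑ i ∈ range M, (y / 2 ^ (i * n) % 2 ^ h) * 2 ^ (i * n) := by
  have hdig : ∀ i < M, y / 2 ^ (i * n) % 2 ^ n < 2 ^ n := fun i _ =>
    Nat.mod_lt _ (Nat.pow_pos (by norm_num))
  have hmask : ∀ i < M, (2 ^ h - 1 : ℕ) < 2 ^ n := by
    intro i _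
    have : (2:ℕ) ^ h ≤ 2 ^ n := Nat.pow_le_pow_right (by norm_num) hhn
    have : (0:ℕ) < 2 ^ h := Nat.pow_pos (by norm_num)
    omega
  conv_lhs => rw [← aux_recompose n M y hy]
  rw [aux_and n M _ _ hdig hmask hn]
  apply Finset.sum_congr rfl
  intro i _
  congr 1
  rw [Nat.and_two_pow_sub_one_eq_mod, Nat.mod_mod_of_dvd _ (pow_dvd_pow 2 hhn)]

theorem block_doubling_step (k M : ℕ) (c : ℕ → ℕ)
    (hc : ∀ i < M, c i < 2 ^ (2 ^ (k + 1)))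
    (hfit : ∀ i < M, c i % 2 ^ (2 ^ k) + c i / 2 ^ (2 ^ k) < 2 ^ (2 ^ (k + 1)))
    (x m : ℕ)
    (hx : x = ∑ i ∈ Finset.range M, c i * 2 ^ (i * 2 ^ (k + 1)))
    (hm : m = ∑ j ∈ Finset.range M, (2 ^ (2 ^ k) - 1) * 2 ^ (j * 2 ^ (k + 1))) :
    ∀ i < M,
      (((x &&& m) + ((x / 2 ^ (2 ^ k)) &&& m)) / 2 ^ (i * 2 ^ (k + 1)))
          % 2 ^ (2 ^ (k + 1))
        = c i % 2 ^ (2 ^ k) + c i / 2 ^ (2 ^ k) := by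
  set n := 2 ^ (k + 1) with hn
  set h := 2 ^ k with hh
  have hnh : n = h + h := by rw [hn, hh, pow_succ]; ring
  have hhn : h ≤ n := by rw [hnh]; exact Nat.le_add_right h h
  have hn0 : 0 < n := Nat.pow_pos (by norm_num)
  have hxlt : x < 2 ^ (M * n) := hx ▸ aux_sum_lt n M c hc
  have hxdiv : x / 2 ^ h < 2 ^ (M * n) :=
    lt_of_le_of_lt (Nat.div_le_self _ _) hxlt
  -- digits of x mod 2^h
  have hd1 : ∀ i < M, x / 2 ^ (i * n) % 2 ^ h = c i % 2 ^ h := by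
    intro i hi
    have : x / 2 ^ (i * n) % 2 ^ n = c i := hx ▸ aux_extract n M c hc i hi
    calc x / 2 ^ (i * n) % 2 ^ h = x / 2 ^ (i * n) % 2 ^ n % 2 ^ h :=
          (Nat.mod_mod_of_dvd _ (pow_dvd_pow 2 hhn)).symm
      _ = c i % 2 ^ h := by rw [this]
  have hd2 : ∀ i < M, (x / 2 ^ h) / 2 ^ (i * n) % 2 ^ h = c i / 2 ^ h := by
    intro i hi
    have hcx : x / 2 ^ (i * n) % 2 ^ n = c i := hx ▸ aux_extract n M c hc i hi
    have hci : c i < 2 ^ n := hc i hi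
    rw [Nat.div_div_eq_div_mul, mul_comm, ← Nat.div_div_eq_div_mul,
      ← Nat.mod_mul_right_div_self]
    rw [show (2:ℕ) ^ h * 2 ^ h = 2 ^ n by rw [← pow_add, hnh], hcx]
  have e1 : x &&& m = ∑ i ∈ range M, (c i % 2 ^ h) * 2 ^ (i * n) := by
    rw [hm, aux_mask n h M x hxlt hhn hn0]
    exact Finset.sum_congr rfl (fun i hi => by rw [hd1 i (Finset.mem_range.mp hi)])
  have e2 : (x / 2 ^ h) &&& m = ∑ i ∈ range M, (c i / 2 ^ h) * 2 ^ (i * n) := by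
    rw [hm, aux_mask n h M _ hxdiv hhn hn0]
    exact Finset.sum_congr rfl (fun i hi => by rw [hd2 i (Finset.mem_range.mp hi)])
  have e3 : (x &&& m) + ((x / 2 ^ h) &&& m)
      = ∑ i ∈ range M, (c i % 2 ^ h + c i / 2 ^ h) * 2 ^ (i * n) := by
    rw [e1, e2, ← Finset.sum_add_distrib]
    exact Finset.sum_congr rfl (fun i _ => by ring)
  intro i hi
  rw [e3]
  exact aux_extract n M _ hfit i hi
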